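/- Let N, d ≥ 1, B > 0, let σ ∈ [0,1), let W ∈ ℝ^{N×N} be doubly stochastic with ‖W − (1/N)𝟙𝟙ᵀ‖_* ≤ σ, let θ* ∈ ℝ^d, and let ε ≥ 0 satisfy ε ≤ (1 − σ²)/(8√2 · BN). Let Θ ∈ ℝ^{N×d} have rows θ_1,…,θ_N with row average θ̄ and consensus error S = ∑_i ‖θ_i − θ̄‖², and let G ∈ ℝ^{N×d} have rows g_1,…,g_N with ‖g_i‖ ≤ B(‖θ_i‖+1) for all i. Set Θ' = WΘ + εG with consensus error S'. Then S' ≤ ((1+σ²)/2) S + (32 ε² B² N/(1−σ²)) ‖θ̄ − θ*‖² + (16 N B² (‖θ*‖² + 1)/(1−σ²)) ε². -/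

import Mathlib

set_option synthInstance.maxHeartbeats 1000000
set_option maxHeartbeats 2000000

/-- Euclidean norm of a vector in `ℝ^d` given as a plain function. -/
noncomputable def euclNorm {d : ℕ} (v : Fin d → ℝ) : ℝ :=
  ‖(WithLp.equiv 2 (Fin d → ℝ)).symm v‖

/-- Spectral (ℓ₂ operator) norm of a square matrix. -/
noncomputable def specNorm {N : ℕ} (M : Matrix (Fin N) (Fin N) ℝ) : ℝ :=
  ‖Matrix.toEuclideanCLM (𝕜 := ℝ) M‖

/-- A matrix is doubly stochastic: nonnegative entries, all row sums and column sums equal 1. -/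
def DoublyStochastic {N : ℕ} (W : Matrix (Fin N) (Fin N) ℝ) : Prop :=
  (∀ i j, 0 ≤ W i j) ∧ (∀ i, ∑ j, W i j = 1) ∧ (∀ j, ∑ i, W i j = 1)

/-- Row average of a matrix `Θ ∈ ℝ^{N×d}`: `θ̄ = (1/N) Θᵀ 𝟙`. -/
noncomputable def rowAvg {N d : ℕ} (Θ : Matrix (Fin N) (Fin d) ℝ) : Fin d → ℝ :=
  fun j => (N : ℝ)⁻¹ * ∑ i, Θ i j

/-- Consensus error `S = ∑ᵢ ‖θᵢ − θ̄‖²` of a matrix of stacked iterates. -/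
noncomputable def consErr {N d : ℕ} (Θ : Matrix (Fin N) (Fin d) ℝ) : ℝ :=
  ∑ i, (euclNorm (fun j => Θ i j - rowAvg Θ j)) ^ 2

lemma enorm_nonneg' {d : ℕ} (v : Fin d → ℝ) : 0 ≤ euclNorm v := norm_nonneg _

lemma enorm_sq {d : ℕ} (v : Fin d → ℝ) : euclNorm v ^ 2 = ∑ j, v j ^ 2 := by
  rw [euclNorm, EuclideanSpace.norm_eq, Real.sq_sqrt (by positivity)]
  simp [sq_abs]

lemma euclNorm_add_le {d : ℕ} (u v : Fin d → ℝ) :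
    euclNorm (fun j => u j + v j) ≤ euclNorm u + euclNorm v :=
  norm_add_le ((WithLp.equiv 2 (Fin d → ℝ)).symm u) ((WithLp.equiv 2 (Fin d → ℝ)).symm v)

lemma enorm_smul' {d : ℕ} (c : ℝ) (v : Fin d → ℝ) :
    euclNorm (fun j => c * v j) = |c| * euclNorm v := by
  have h : (WithLp.equiv 2 (Fin d → ℝ)).symm (fun j => c * v j)
      = c • (WithLp.equiv 2 (Fin d → ℝ)).symm v := rfl
  rw [euclNorm, h, norm_smul, Real.norm_eq_abs, euclNorm]

lemma spec_mulVec {N : ℕ} (M : Matrix (Fin N) (Fin N) ℝ) (σ : ℝ) (h : specNorm M ≤ σ)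
    (v : Fin N → ℝ) : euclNorm (M.mulVec v) ≤ σ * euclNorm v := by
  have h2 := (Matrix.toEuclideanCLM (𝕜 := ℝ) M).le_opNorm ((WithLp.equiv 2 (Fin N → ℝ)).symm v)
  rw [WithLp.equiv_symm_apply, Matrix.toEuclideanCLM_toLp] at h2
  have h3 : euclNorm (M.mulVec v) ≤ specNorm M * euclNorm v := by
    simpa [euclNorm, specNorm, Matrix.toLin'_apply] using h2
  exact h3.trans (mul_le_mul_of_nonneg_right h (enorm_nonneg' v))

lemma centering {N : ℕ} (v : Fin N → ℝ) (m : ℝ) (hsum : ∑ i, v i = (N : ℝ) * m) :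
    ∑ i, (v i - m) ^ 2 = (∑ i, (v i) ^ 2) - (N : ℝ) * m ^ 2 := by
  have h : ∀ i ∈ Finset.univ, (v i - m) ^ 2 = (v i) ^ 2 - 2 * m * (v i) + m ^ 2 := by
    intros; ring
  rw [Finset.sum_congr rfl h, Finset.sum_add_distrib, Finset.sum_sub_distrib,
    ← Finset.mul_sum, hsum, Finset.sum_const, Finset.card_univ, Fintype.card_fin,
    nsmul_eq_mul]
  ring

lemma young_ineq (σ ε A C : ℝ) (hσ0 : 0 ≤ σ) (hσ1 : σ < 1) :
    (σ * A + ε * C) ^ 2 ≤ 4 * σ ^ 2 / (3 + σ ^ 2) * A ^ 2 + 4 * ε ^ 2 / (1 - σ ^ 2) * C ^ 2 := by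
  have h1 : (0:ℝ) < 3 + σ ^ 2 := by nlinarith
  have h2 : (0:ℝ) < 1 - σ ^ 2 := by nlinarith
  have key : 4 * σ ^ 2 / (3 + σ ^ 2) * A ^ 2 + 4 * ε ^ 2 / (1 - σ ^ 2) * C ^ 2
      - (σ * A + ε * C) ^ 2
      = ((1 - σ ^ 2) * (σ * A) - (3 + σ ^ 2) * (ε * C)) ^ 2 / ((3 + σ ^ 2) * (1 - σ ^ 2)) := by
    field_simp
    ring
  nlinarith [div_nonneg (sq_nonneg ((1 - σ ^ 2) * (σ * A) - (3 + σ ^ 2) * (ε * C)))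
    (le_of_lt (mul_pos h1 h2)), key]

/-- One-step contraction of the consensus error under spectral gap `σ`:
`S' ≤ ((1+σ²)/2) S + (32 ε² B² N/(1−σ²)) ‖θ̄ − θ*‖² + (16 N B² (‖θ*‖² + 1)/(1−σ²)) ε²`. -/
theorem consensus_error_contraction (N d : ℕ) (hN : 1 ≤ N) (hd : 1 ≤ d)
    (B σ ε : ℝ) (hB : 0 < B) (hσ0 : 0 ≤ σ) (hσ1 : σ < 1) (hε : 0 ≤ ε)
    (W : Matrix (Fin N) (Fin N) ℝ) (hW : DoublyStochastic W)
    (hWspec : specNorm (W - (N : ℝ)⁻¹ •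
      Matrix.of (fun (_ : Fin N) (_ : Fin N) => (1 : ℝ))) ≤ σ)
    (θstar : Fin d → ℝ)
    (hεsmall : ε ≤ (1 - σ ^ 2) / (8 * Real.sqrt 2 * B * N))
    (Θ G : Matrix (Fin N) (Fin d) ℝ)
    (hG : ∀ i, euclNorm (fun j => G i j) ≤ B * (euclNorm (fun j => Θ i j) + 1))
    (Θ' : Matrix (Fin N) (Fin d) ℝ) (hΘ' : Θ' = W * Θ + ε • G) :
    consErr Θ'
      ≤ (1 + σ ^ 2) / 2 * consErr Θ
        + 32 * ε ^ 2 * B ^ 2 * N / (1 - σ ^ 2) *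
            (euclNorm (fun j => rowAvg Θ j - θstar j)) ^ 2
        + 16 * N * B ^ 2 * ((euclNorm θstar) ^ 2 + 1) / (1 - σ ^ 2) * ε ^ 2 := by
  have hN0 : (0:ℝ) < N := by exact_mod_cast Nat.lt_of_lt_of_le Nat.zero_lt_one hN
  have hNne : (N:ℝ) ≠ 0 := ne_of_gt hN0
  have h2 : (0:ℝ) < 1 - σ ^ 2 := by nlinarith
  set M : Matrix (Fin N) (Fin N) ℝ :=
    W - (N : ℝ)⁻¹ • Matrix.of (fun (_ : Fin N) (_ : Fin N) => (1 : ℝ)) with hM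
  set m : Fin d → ℝ := rowAvg Θ with hm
  set g : Fin d → ℝ := rowAvg G with hg
  set x : Fin d → Fin N → ℝ := fun j i => Θ i j - m j with hx
  set p : Fin d → Fin N → ℝ := fun j i => G i j - g j with hp
  have hrowW : ∀ i, ∑ k, W i k = 1 := hW.2.1
  have hcolW : ∀ k, ∑ i, W i k = 1 := hW.2.2
  have hmj : ∀ j, (N:ℝ)⁻¹ * ∑ k, Θ k j = m j := fun j => rfl
  have hgj : ∀ j, (N:ℝ)⁻¹ * ∑ k, G k j = g j := fun j => rfl
  have hΘ'e : ∀ i j, Θ' i j = (∑ k, W i k * Θ k j) + ε * G i j := by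
    intro i j
    simp [hΘ', Matrix.mul_apply, Matrix.add_apply, Matrix.smul_apply]
  have hWsum : ∀ j, ∑ i, ∑ k, W i k * Θ k j = ∑ k, Θ k j := by
    intro j
    rw [Finset.sum_comm]
    refine Finset.sum_congr rfl fun k _ => ?_
    rw [← Finset.sum_mul, hcolW k, one_mul]
  have havg' : ∀ j, rowAvg Θ' j = m j + ε * g j := by
    intro j
    show (N : ℝ)⁻¹ * ∑ i, Θ' i j = m j + ε * g j
    rw [Finset.sum_congr rfl fun i _ => hΘ'e i j, Finset.sum_add_distrib, hWsum,
      ← Finset.mul_sum, mul_add, hmj]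
    rw [← hgj j]; ring
  have hMapply : ∀ (v : Fin N → ℝ) i, M.mulVec v i = ∑ k, (W i k - (N:ℝ)⁻¹) * v k := by
    intro v i
    simp [hM, Matrix.mulVec, dotProduct, Matrix.sub_apply, Matrix.smul_apply,
      Matrix.of_apply]
  have hcol : ∀ j i, Θ' i j - rowAvg Θ' j = M.mulVec (x j) i + ε * p j i := by
    intro j i
    rw [hΘ'e, havg', hMapply]
    have e1 : ∀ k, (W i k - (N:ℝ)⁻¹) * (x j k)
        = W i k * Θ k j - m j * W i k - (N:ℝ)⁻¹ * Θ k j + (N:ℝ)⁻¹ * m j := by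
      intro k; simp only [hx]; ring
    rw [Finset.sum_congr rfl fun k _ => e1 k, Finset.sum_add_distrib,
      Finset.sum_sub_distrib, Finset.sum_sub_distrib, ← Finset.mul_sum, ← Finset.mul_sum,
      hrowW i, hmj, Finset.sum_const, Finset.card_univ, Fintype.card_fin, nsmul_eq_mul]
    have : (N:ℝ) * ((N:ℝ)⁻¹ * m j) = m j := by field_simp
    rw [this]
    simp only [hp]; ring
  -- consensus error of Θ' as a sum over columns
  have hS' : consErr Θ' = ∑ j, euclNorm (fun i => M.mulVec (x j) i + ε * p j i) ^ 2 := by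
    unfold consErr
    rw [Finset.sum_congr rfl fun i _ => enorm_sq _]
    rw [Finset.sum_comm]
    refine Finset.sum_congr rfl fun j _ => ?_
    rw [enorm_sq]
    exact Finset.sum_congr rfl fun i _ => by rw [hcol j i]
  have hS : consErr Θ = ∑ j, euclNorm (x j) ^ 2 := by
    unfold consErr
    rw [Finset.sum_congr rfl fun i _ => enorm_sq _, Finset.sum_comm]
    exact Finset.sum_congr rfl fun j _ => (enorm_sq _).symm
  -- per-column bound
  have hσcol : ∀ j, euclNorm (fun i => M.mulVec (x j) i + ε * p j i)
      ≤ σ * euclNorm (x j) + ε * euclNorm (p j) := by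
    intro j
    have t1 : euclNorm (fun i => M.mulVec (x j) i + ε * p j i)
        ≤ euclNorm (M.mulVec (x j)) + euclNorm (fun i => ε * p j i) :=
      euclNorm_add_le (M.mulVec (x j)) (fun i => ε * p j i)
    have t2 : euclNorm (M.mulVec (x j)) ≤ σ * euclNorm (x j) := spec_mulVec M σ hWspec (x j)
    have t3 : euclNorm (fun i => ε * p j i) = ε * euclNorm (p j) := by
      rw [enorm_smul', abs_of_nonneg hε]
    linarith
  have hcolsq : ∀ j, euclNorm (fun i => M.mulVec (x j) i + ε * p j i) ^ 2
      ≤ 4 * σ ^ 2 / (3 + σ ^ 2) * euclNorm (x j) ^ 2 + 4 * ε ^ 2 / (1 - σ ^ 2) * euclNorm (p j) ^ 2 := by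
    intro j
    have h0 := enorm_nonneg' (fun i => M.mulVec (x j) i + ε * p j i)
    have := pow_le_pow_left₀ h0 (hσcol j) 2
    exact this.trans (young_ineq σ ε (euclNorm (x j)) (euclNorm (p j)) hσ0 hσ1)
  set Fp : ℝ := ∑ j, euclNorm (p j) ^ 2 with hFpdef
  have hmain : consErr Θ' ≤ 4 * σ ^ 2 / (3 + σ ^ 2) * consErr Θ
      + 4 * ε ^ 2 / (1 - σ ^ 2) * Fp := by
    rw [hS', hS, hFpdef, Finset.mul_sum, Finset.mul_sum, ← Finset.sum_add_distrib]
    exact Finset.sum_le_sum fun j _ => hcolsq j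
  -- bound Fp
  have hGsum : ∀ j, ∑ i, G i j = (N:ℝ) * g j := by
    intro j; rw [← hgj j]; field_simp
  have hΘsum : ∀ j, ∑ i, Θ i j = (N:ℝ) * m j := by
    intro j; rw [← hmj j]; field_simp
  have hFpG : Fp ≤ ∑ i, euclNorm (fun j => G i j) ^ 2 := by
    have hR : ∑ i, euclNorm (fun j => G i j) ^ 2 = ∑ j, ∑ i, G i j ^ 2 := by
      rw [Finset.sum_congr rfl fun i _ => enorm_sq _]; exact Finset.sum_comm
    rw [hFpdef, hR]
    refine Finset.sum_le_sum fun j _ => ?_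
    rw [enorm_sq]
    have hc := centering (fun i => G i j) (g j) (hGsum j)
    simp only [hp]
    rw [hc]
    nlinarith [sq_nonneg (g j), hN0]
  have hΘnormsum : ∑ i, euclNorm (fun j => Θ i j) ^ 2
      = consErr Θ + (N:ℝ) * euclNorm m ^ 2 := by
    rw [Finset.sum_congr rfl fun i _ => enorm_sq _, Finset.sum_comm, hS,
      enorm_sq m, Finset.mul_sum, ← Finset.sum_add_distrib]
    refine Finset.sum_congr rfl fun j _ => ?_
    rw [enorm_sq]
    have := centering (fun i => Θ i j) (m j) (hΘsum j)
    simp only [hx]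
    rw [this]
    ring
  have hGrow : ∀ i, euclNorm (fun j => G i j) ^ 2
      ≤ 2 * B ^ 2 * (euclNorm (fun j => Θ i j) ^ 2 + 1) := by
    intro i
    have h0 := enorm_nonneg' (fun j => G i j)
    have h1 := enorm_nonneg' (fun j => Θ i j)
    have := pow_le_pow_left₀ h0 (hG i) 2
    nlinarith [sq_nonneg (euclNorm (fun j => Θ i j) - 1)]
  set T : ℝ := euclNorm θstar ^ 2 with hT
  set D : ℝ := euclNorm (fun j => m j - θstar j) ^ 2 with hD
  have hmT : euclNorm m ^ 2 ≤ 2 * D + 2 * T := by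
    have tri : euclNorm m ≤ euclNorm (fun j => m j - θstar j) + euclNorm θstar := by
      have := euclNorm_add_le (fun j => m j - θstar j) θstar
      simpa using this
    have h0 := enorm_nonneg' m
    have h1 := enorm_nonneg' (fun j => m j - θstar j)
    have h2 := enorm_nonneg' θstar
    nlinarith [sq_nonneg (euclNorm (fun j => m j - θstar j) - euclNorm θstar)]
  have hFpbound : Fp ≤ 2 * B ^ 2 * consErr Θ + 2 * B ^ 2 * N * (2 * D + 2 * T)
      + 2 * B ^ 2 * N := by
    have s1 : Fp ≤ ∑ i, 2 * B ^ 2 * (euclNorm (fun j => Θ i j) ^ 2 + 1) :=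
      hFpG.trans (Finset.sum_le_sum fun i _ => hGrow i)
    have s2 : ∑ i, 2 * B ^ 2 * (euclNorm (fun j => Θ i j) ^ 2 + 1)
        = 2 * B ^ 2 * (consErr Θ + (N:ℝ) * euclNorm m ^ 2) + 2 * B ^ 2 * N := by
      rw [← Finset.mul_sum, Finset.sum_add_distrib, hΘnormsum]
      simp [Finset.sum_const]
      ring
    rw [s2] at s1
    have s3 : 2 * B ^ 2 * (N:ℝ) * euclNorm m ^ 2 ≤ 2 * B ^ 2 * (N:ℝ) * (2 * D + 2 * T) :=
      mul_le_mul_of_nonneg_left hmT (by positivity)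
    nlinarith [s1, s3]
  -- smallness of ε
  have hεB : 128 * ε ^ 2 * B ^ 2 ≤ (1 - σ ^ 2) ^ 2 := by
    have hden : (0:ℝ) < 8 * Real.sqrt 2 * B * N := by
      have : (0:ℝ) < Real.sqrt 2 := Real.sqrt_pos.mpr (by norm_num)
      positivity
    have h1 : ε * (8 * Real.sqrt 2 * B * N) ≤ 1 - σ ^ 2 := by
      rw [← le_div_iff₀ hden]; exact hεsmall
    have hsq : (ε * (8 * Real.sqrt 2 * B * N)) ^ 2 ≤ (1 - σ ^ 2) ^ 2 := by
      apply pow_le_pow_left₀ (by positivity) h1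
    have hs2 : Real.sqrt 2 ^ 2 = 2 := Real.sq_sqrt (by norm_num)
    have hexp : (ε * (8 * Real.sqrt 2 * B * N)) ^ 2 = 128 * ε ^ 2 * B ^ 2 * (N:ℝ) ^ 2 := by
      rw [mul_pow, mul_pow, mul_pow, mul_pow, hs2]; ring
    rw [hexp] at hsq
    have hN1 : (1:ℝ) ≤ (N:ℝ) := by exact_mod_cast hN
    have hN2 : (1:ℝ) ≤ (N:ℝ) ^ 2 := by nlinarith
    have := mul_le_mul_of_nonneg_left hN2 (by positivity : (0:ℝ) ≤ 128 * ε ^ 2 * B ^ 2)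
    nlinarith [this, hsq]
  -- coefficient inequality
  have hcoef : 4 * σ ^ 2 / (3 + σ ^ 2) + 8 * B ^ 2 * (ε ^ 2 / (1 - σ ^ 2)) ≤ (1 + σ ^ 2) / 2 := by
    have h3 : (0:ℝ) < 3 + σ ^ 2 := by nlinarith
    have a1 : 4 * σ ^ 2 / (3 + σ ^ 2) ≤ (1 + σ ^ 2) / 2 - (1 - σ ^ 2) / 16 := by
      rw [div_le_iff₀ h3]
      nlinarith [mul_nonneg (sub_nonneg.mpr hσ1.le) (sub_nonneg.mpr hσ1.le)]
    have a2 : 8 * B ^ 2 * (ε ^ 2 / (1 - σ ^ 2)) ≤ (1 - σ ^ 2) / 16 := by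
      have e : 8 * B ^ 2 * (ε ^ 2 / (1 - σ ^ 2)) = 8 * B ^ 2 * ε ^ 2 / (1 - σ ^ 2) := by ring
      rw [e, div_le_div_iff₀ h2 (by norm_num : (0:ℝ) < 16)]
      nlinarith [hεB]
    linarith
  -- final combination
  set S : ℝ := consErr Θ with hSdef
  set E : ℝ := ε ^ 2 / (1 - σ ^ 2) with hE
  have hEnn : 0 ≤ E := by positivity
  have hSnn : 0 ≤ S := Finset.sum_nonneg fun i _ => sq_nonneg _
  have hDnn : 0 ≤ D := sq_nonneg _
  have hTnn : 0 ≤ T := sq_nonneg _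
  have hgoal1 : 32 * ε ^ 2 * B ^ 2 * (N:ℝ) / (1 - σ ^ 2) = 32 * B ^ 2 * N * E := by
    rw [hE]; ring
  have hgoal2 : 16 * (N:ℝ) * B ^ 2 * (T + 1) / (1 - σ ^ 2) * ε ^ 2
      = 16 * N * B ^ 2 * (T + 1) * E := by
    rw [hE]; ring
  have hc2 : 4 * ε ^ 2 / (1 - σ ^ 2) = 4 * E := by rw [hE]; ring
  rw [hgoal1, hgoal2]
  rw [hc2] at hmain
  have t1 : 4 * E * Fp ≤ 4 * E * (2 * B ^ 2 * S + 2 * B ^ 2 * N * (2 * D + 2 * T)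
      + 2 * B ^ 2 * N) := by
    apply mul_le_mul_of_nonneg_left hFpbound (by positivity)
  have t3 : (4 * σ ^ 2 / (3 + σ ^ 2) + 8 * B ^ 2 * E) * S ≤ (1 + σ ^ 2) / 2 * S :=
    mul_le_mul_of_nonneg_right hcoef hSnn
  have t4 : 16 * B ^ 2 * (N:ℝ) * E * D ≤ 32 * B ^ 2 * (N:ℝ) * E * D := by
    nlinarith [mul_nonneg (mul_nonneg (mul_nonneg (sq_nonneg B) hN0.le) hEnn) hDnn]
  have t1' : 4 * E * Fp ≤ 8 * B ^ 2 * E * S + 16 * B ^ 2 * (N:ℝ) * E * D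
      + 16 * B ^ 2 * (N:ℝ) * E * T + 8 * B ^ 2 * (N:ℝ) * E := t1.trans_eq (by ring)
  have t3' : 4 * σ ^ 2 / (3 + σ ^ 2) * S + 8 * B ^ 2 * E * S ≤ (1 + σ ^ 2) / 2 * S :=
    le_of_eq_of_le (by ring) t3
  have t5 : 8 * B ^ 2 * (N:ℝ) * E ≤ 16 * B ^ 2 * (N:ℝ) * E := by
    have : (0:ℝ) ≤ B ^ 2 * (N:ℝ) * E := by positivity
    linarith
  have tgt : (1 + σ ^ 2) / 2 * S + 32 * B ^ 2 * (N:ℝ) * E * D + 16 * (N:ℝ) * B ^ 2 * (T + 1) * E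
      = (1 + σ ^ 2) / 2 * S + 32 * B ^ 2 * (N:ℝ) * E * D + 16 * B ^ 2 * (N:ℝ) * E * T
        + 16 * B ^ 2 * (N:ℝ) * E := by ring
  rw [tgt]
  linarith [hmain, t1', t3', t4, t5]
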